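/- arXiv:1501.05806 — 2 statements merged into one kernel-verified Lean document; each statement's English description precedes it below -/
import Mathlib

section
/- Let n and i be positive integers with i < n and gcd(n, i) = 1. Then the ℂ-linear span of all products of between 1 and 2n − 2 elements of {J_n^i, (J_nᵀ)^{n−i}} is all of M_n(ℂ); that is, l_0({J_n^i, (J_nᵀ)^{n−i}}) = l({J_n^i, (J_nᵀ)^{n−i}}) = 2n − 2. -/
open Matrix

/-- The `n × n` nilpotent Jordan block over `ℂ`. -/
def jordan (n : ℕ) : Matrix (Fin n) (Fin n) ℂ :=
  Matrix.of fun a b => if (a : ℕ) + 1 = (b : ℕ) then 1 else 0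

/-- `L_k(S)`: the ℂ-linear span of all words in `S` of length at most `k`
(including the empty word, the identity matrix). -/
noncomputable def wordSpan (n k : ℕ) (S : Set (Matrix (Fin n) (Fin n) ℂ)) :
    Submodule ℂ (Matrix (Fin n) (Fin n) ℂ) :=
  Submodule.span ℂ {M | ∃ w : List (Matrix (Fin n) (Fin n) ℂ),
    w.length ≤ k ∧ (∀ x ∈ w, x ∈ S) ∧ M = w.prod}

/-- `L_k^0(S)`: the ℂ-linear span of all words in `S` of length between `1` and `k`. -/
noncomputable def wordSpan0 (n k : ℕ) (S : Set (Matrix (Fin n) (Fin n) ℂ)) :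
    Submodule ℂ (Matrix (Fin n) (Fin n) ℂ) :=
  Submodule.span ℂ {M | ∃ w : List (Matrix (Fin n) (Fin n) ℂ),
    1 ≤ w.length ∧ w.length ≤ k ∧ (∀ x ∈ w, x ∈ S) ∧ M = w.prod}


namespace Stmt18

noncomputable def step (n i : ℕ) (x : Bool) : Matrix (Fin n) (Fin n) ℂ :=
  if x then jordan n ^ i else (jordan n)ᵀ ^ (n - i)

lemma pow_jordan_apply (n k : ℕ) (a b : Fin n) :
    (jordan n ^ k) a b = if (a : ℕ) + k = (b : ℕ) then 1 else 0 := by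
  induction k generalizing b with
  | zero =>
    rw [pow_zero, Matrix.one_apply]
    by_cases h : a = b
    · subst h; simp
    · rw [if_neg h, if_neg (by simpa [Fin.ext_iff] using h)]
  | succ k ih =>
    rw [pow_succ, Matrix.mul_apply]
    by_cases hb : 0 < (b : ℕ)
    · have hb1 : ((b : ℕ) - 1) < n := by omega
      rw [Finset.sum_eq_single (⟨(b : ℕ) - 1, hb1⟩ : Fin n)]
      · rw [ih]
        have h1 : (jordan n) ⟨(b:ℕ)-1, hb1⟩ b = 1 := by
          simp [jordan, Nat.sub_add_cancel hb]
        rw [h1, mul_one]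
        by_cases h : (a:ℕ) + (k+1) = (b:ℕ)
        · rw [if_pos (by omega : (a:ℕ) + k = ((b:ℕ) - 1)), if_pos h]
        · rw [if_neg (by omega : ¬ ((a:ℕ) + k = ((b:ℕ) - 1))), if_neg h]
      · intro c _ hc
        have h0 : (jordan n) c b = 0 := by
          have : ¬ ((c:ℕ) + 1 = (b:ℕ)) := by
            intro h
            exact hc (by simp [Fin.ext_iff]; omega)
          simp [jordan, this]
        rw [h0, mul_zero]
      · intro h
        exact absurd (Finset.mem_univ _) h
    · have h0 : ∀ c : Fin n, (jordan n) c b = 0 := by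
        intro c
        have : ¬ ((c:ℕ) + 1 = (b:ℕ)) := by omega
        simp [jordan, this]
      simp only [h0, mul_zero, Finset.sum_const_zero]
      rw [if_neg (by omega)]

lemma step_apply (n i : ℕ) (hin : i < n) (x : Bool) (a b : Fin n) :
    step n i x a b =
      if (x = decide ((a : ℕ) + i < n)) ∧ (b : ℕ) = ((a : ℕ) + i) % n then 1 else 0 := by
  have ha := a.isLt
  have hb := b.isLt
  cases x with
  | true =>
    rw [step, if_pos rfl, pow_jordan_apply]
    by_cases h : (a : ℕ) + i < n
    · have hd : (true = decide ((a:ℕ) + i < n)) := by simp [h]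
      rw [Nat.mod_eq_of_lt h]
      by_cases h2 : (a:ℕ) + i = (b:ℕ)
      · rw [if_pos h2, if_pos ⟨hd, h2.symm⟩]
      · rw [if_neg h2, if_neg (by rintro ⟨-, h3⟩; exact h2 h3.symm)]
    · rw [if_neg (by omega), if_neg (by rintro ⟨h1, -⟩; simp [h] at h1)]
  | false =>
    have hT : ((jordan n)ᵀ ^ (n - i)) a b = (jordan n ^ (n-i)) b a := by
      rw [← Matrix.transpose_pow, Matrix.transpose_apply]
    rw [step, if_neg (by simp), hT, pow_jordan_apply]
    by_cases h : (a : ℕ) + i < n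
    · rw [if_neg (by omega), if_neg (by rintro ⟨h1, -⟩; simp [h] at h1)]
    · have hd : (false = decide ((a:ℕ) + i < n)) := by simp [h]
      have hm : ((a:ℕ) + i) % n = (a:ℕ) + i - n := by
        rw [Nat.mod_eq_sub_mod (by omega), Nat.mod_eq_of_lt (by omega)]
      rw [hm]
      by_cases h2 : (b:ℕ) + (n - i) = (a:ℕ)
      · rw [if_pos h2, if_pos ⟨hd, by omega⟩]
      · rw [if_neg h2, if_neg (by rintro ⟨-, h3⟩; omega)]



def greedy (n i : ℕ) : ℕ → ℕ → List Bool
  | 0, _ => []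
  | L+1, p => decide (p + i < n) :: greedy n i L ((p + i) % n)

noncomputable def wordProd (n i : ℕ) (bs : List Bool) : Matrix (Fin n) (Fin n) ℂ :=
  (bs.map (step n i)).prod

@[simp] lemma greedy_length (n i L p : ℕ) : (greedy n i L p).length = L := by
  induction L generalizing p with
  | zero => rfl
  | succ L ih => simp [greedy, ih]

lemma shift_mod (n i p t : ℕ) : ((p + i) % n + t * i) % n = (p + (t+1) * i) % n := by
  rw [Nat.mod_add_mod]; congr 1; ring

lemma wordProd_apply (n i : ℕ) (hin : i < n) (bs : List Bool) (a b : Fin n) :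
    wordProd n i bs a b =
      if bs = greedy n i bs.length (a : ℕ) ∧ (b : ℕ) = ((a : ℕ) + bs.length * i) % n
      then 1 else 0 := by
  have hn : 0 < n := lt_of_le_of_lt (Nat.zero_le _) hin
  induction bs generalizing a with
  | nil =>
    simp only [wordProd, List.map_nil, List.prod_nil, List.length_nil, greedy,
      Nat.zero_mul, Nat.add_zero, Nat.mod_eq_of_lt a.isLt, Matrix.one_apply]
    by_cases h : a = b
    · subst h; simp
    · rw [if_neg h, if_neg (by rintro ⟨-, h2⟩; exact h (Fin.ext h2.symm))]
  | cons x t ih =>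
    have hstep : wordProd n i (x :: t) = step n i x * wordProd n i t := by
      simp [wordProd]
    rw [hstep, Matrix.mul_apply]
    by_cases hx : x = decide ((a : ℕ) + i < n)
    · set a' : Fin n := ⟨((a : ℕ) + i) % n, Nat.mod_lt _ hn⟩ with ha'
      have hs : ∀ c : Fin n, step n i x a c = if c = a' then 1 else 0 := by
        intro c
        rw [step_apply n i hin]
        by_cases hc : c = a'
        · rw [if_pos hc, if_pos ⟨hx, by rw [hc]⟩]
        · rw [if_neg hc, if_neg (by rintro ⟨-, h2⟩; exact hc (Fin.ext h2))]
      simp only [hs, ite_mul, one_mul, zero_mul]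
      rw [Finset.sum_ite_eq' Finset.univ a' (fun c => wordProd n i t c b),
        if_pos (Finset.mem_univ _)]
      rw [ih a']
      have hcond : (t = greedy n i t.length (a' : ℕ) ∧
            (b : ℕ) = ((a' : ℕ) + t.length * i) % n) ↔
          ((x :: t) = greedy n i (x :: t).length (a : ℕ) ∧
            (b : ℕ) = ((a : ℕ) + (x :: t).length * i) % n) := by
        simp only [List.length_cons, greedy, List.cons_eq_cons, ha', shift_mod]
        tauto
      by_cases hc : t = greedy n i t.length (a' : ℕ) ∧ (b : ℕ) = ((a' : ℕ) + t.length * i) % n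
      · rw [if_pos hc, if_pos (hcond.mp hc)]
      · rw [if_neg hc, if_neg (fun h => hc (hcond.mpr h))]
    · have hs : ∀ c : Fin n, step n i x a c = 0 := by
        intro c
        rw [step_apply n i hin, if_neg (by rintro ⟨h1, -⟩; exact hx h1)]
      simp only [hs, zero_mul, Finset.sum_const_zero]
      rw [if_neg]
      rintro ⟨h1, -⟩
      rw [List.length_cons, greedy, List.cons_eq_cons] at h1
      exact hx h1.1




lemma zmod_core (n i : ℕ) (hi : 0 < i) (hin : i < n) (hgcd : Nat.gcd n i = 1) {p q : ℕ}
    (hp : p < n) (hq : q < n)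
    (h : ∀ t, t ≤ n - 2 → ((p + t * i) % n + i < n ↔ (q + t * i) % n + i < n)) : p = q := by
  by_contra hne
  have hn : 2 ≤ n := by omega
  haveI : NeZero n := ⟨by omega⟩
  set k : ZMod n := ((i : ℕ) : ZMod n) with hk
  have hu : IsUnit k := by
    rw [hk, ZMod.isUnit_iff_coprime]
    rwa [Nat.Coprime, Nat.gcd_comm]
  set F : ZMod n → ℕ := fun x => if x.val + i < n then 1 else 0 with hF
  have e2 : ∀ (r : ℕ) (t : ZMod n),
      F ((r : ZMod n) + t * k) = if (r + t.val * i) % n + i < n then 1 else 0 := by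
    intro r t
    have e1 : ((r : ZMod n) + t * k) = ((r + t.val * i : ℕ) : ZMod n) := by
      push_cast
      rw [ZMod.natCast_rightInverse t]
    rw [e1, hF]
    simp only [ZMod.val_natCast]
  have key : ∀ t : ZMod n, t.val ≤ n - 2 →
      F ((p : ZMod n) + t * k) = F ((q : ZMod n) + t * k) := by
    intro t ht
    rw [e2, e2]
    exact if_congr (h t.val ht) rfl rfl
  have hbij : ∀ r : ℕ, Function.Bijective (fun t : ZMod n => (r : ZMod n) + t * k) := by
    intro r
    rw [← Finite.injective_iff_bijective]
    intro x y hxy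
    exact hu.mul_right_cancel (add_left_cancel hxy)
  have hsum : ∑ t : ZMod n, F ((p : ZMod n) + t * k) = ∑ t : ZMod n, F ((q : ZMod n) + t * k) := by
    rw [Function.Bijective.sum_comp (hbij p) F, Function.Bijective.sum_comp (hbij q) F]
  set t1 : ZMod n := ((n - 1 : ℕ) : ZMod n) with ht1
  have ht1val : t1.val = n - 1 := by
    rw [ht1, ZMod.val_natCast, Nat.mod_eq_of_lt (by omega)]
  have hother : ∀ t ∈ Finset.univ.erase t1, F ((p : ZMod n) + t * k) = F ((q : ZMod n) + t * k) := by
    intro t ht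
    apply key
    have hne1 : t ≠ t1 := (Finset.mem_erase.mp ht).1
    have hv := ZMod.val_lt t
    by_contra hgt
    exact hne1 (ZMod.val_injective n (by omega : t.val = t1.val))
  have hlast : F ((p : ZMod n) + t1 * k) = F ((q : ZMod n) + t1 * k) := by
    have h1 := Finset.add_sum_erase Finset.univ (fun t => F ((p : ZMod n) + t * k))
      (Finset.mem_univ t1)
    have h2 := Finset.add_sum_erase Finset.univ (fun t => F ((q : ZMod n) + t * k))
      (Finset.mem_univ t1)
    have h3 := Finset.sum_congr rfl hother
    rw [← h1, ← h2, h3] at hsum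
    exact Nat.add_right_cancel hsum
  have hall : ∀ t : ZMod n, F ((p : ZMod n) + t * k) = F ((q : ZMod n) + t * k) := by
    intro t
    by_cases ht : t.val ≤ n - 2
    · exact key t ht
    · have hv := ZMod.val_lt t
      have : t = t1 := ZMod.val_injective n (by omega : t.val = t1.val)
      rw [this]; exact hlast
  set δ : ZMod n := (q : ZMod n) - (p : ZMod n) with hδ
  have hδ0 : δ ≠ 0 := by
    rw [hδ, sub_ne_zero]
    intro hpq
    have h' := congrArg ZMod.val hpq
    rw [ZMod.val_natCast, ZMod.val_natCast, Nat.mod_eq_of_lt hq, Nat.mod_eq_of_lt hp] at h'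
    exact hne h'.symm
  have hper : ∀ x : ZMod n, F x = F (x + δ) := by
    intro x
    have hmul : (x - (p : ZMod n)) * ↑hu.unit⁻¹ * k = x - (p : ZMod n) := by
      rw [mul_assoc]
      nth_rewrite 2 [← hu.unit_spec]
      rw [Units.inv_mul, mul_one]
    have h' := hall ((x - (p : ZMod n)) * ↑hu.unit⁻¹)
    rw [hmul] at h'
    have ep : (p : ZMod n) + (x - (p : ZMod n)) = x := by ring
    have eq' : (q : ZMod n) + (x - (p : ZMod n)) = x + δ := by rw [hδ]; ring
    rwa [ep, eq'] at h'
  have hperN : ∀ (m : ℕ) (x : ZMod n), F x = F (x + (m : ZMod n) * δ) := by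
    intro m
    induction m with
    | zero => simp
    | succ m ih =>
      intro x
      rw [ih x, hper (x + (m : ZMod n) * δ)]
      congr 1
      push_cast
      ring
  -- Bezout
  set d : ℕ := δ.val with hd
  have hdpos : 0 < d := by
    rw [hd]
    exact ZMod.val_pos.mpr hδ0
  have hdlt : d < n := ZMod.val_lt δ
  set g : ℕ := Nat.gcd d n with hg
  have hgz : ∃ w : ℕ, (g : ZMod n) = (w : ZMod n) * δ := by
    have hb := Nat.gcd_eq_gcd_ab d n
    have hc : ((g : ℤ) : ZMod n) = ((d * Nat.gcdA d n + n * Nat.gcdB d n : ℤ) : ZMod n) := by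
      rw [← hb]
    push_cast at hc
    rw [ZMod.natCast_self, zero_mul, add_zero] at hc
    refine ⟨(((Nat.gcdA d n : ℤ) : ZMod n)).val, ?_⟩
    rw [ZMod.natCast_rightInverse (((Nat.gcdA d n : ℤ) : ZMod n))]
    rw [hc, hd, ZMod.natCast_rightInverse δ]
    ring
  have hperg : ∀ (m : ℕ) (x : ZMod n), F x = F (x + ((m * g : ℕ) : ZMod n)) := by
    obtain ⟨w, hw⟩ := hgz
    intro m x
    have := hperN (m * w) x
    rw [this]
    congr 1
    push_cast [hw]
    push_cast
    ring
  have hgpos : 0 < g := Nat.gcd_pos_of_pos_left n hdpos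
  have hgdvd : g ∣ n := Nat.gcd_dvd_right d n
  have hglt : g < n := lt_of_le_of_lt (Nat.gcd_le_left n hdpos) hdlt
  obtain ⟨m, hm⟩ := hgdvd
  have hmg : m * g = n := by rw [hm]; ring
  have hm2 : 2 ≤ m := by
    by_contra hc
    interval_cases m <;> omega
  have hn2g : 2 * g ≤ n := by
    calc 2 * g ≤ m * g := Nat.mul_le_mul_right g hm2
    _ = n := hmg
  have hF0 : F 0 = 1 := by
    simp only [hF, ZMod.val_zero]
    rw [if_pos (by omega)]
  have e : ((m - 1) * g : ℕ) = n - g := by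
    rw [Nat.sub_mul, one_mul, hmg]
  -- F (n - g) = 1  ⇒ i < g
  have hig : i < g := by
    have h1 := hperg (m - 1) 0
    rw [hF0, zero_add, e] at h1
    simp only [hF, ZMod.val_natCast] at h1
    rw [Nat.mod_eq_of_lt (by omega : n - g < n)] at h1
    by_contra hig
    rw [if_neg (by omega)] at h1
    omega
  -- F (n-1) = 0 ⇒ g - 1 + i ≥ n
  have hgi : n ≤ g - 1 + i := by
    have h1 := hperg (m - 1) ((g - 1 : ℕ) : ZMod n)
    rw [e] at h1
    have e2 : (((g - 1 : ℕ) : ZMod n) + ((n - g : ℕ) : ZMod n)) = ((n - 1 : ℕ) : ZMod n) := by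
      rw [← Nat.cast_add]
      congr 1
      omega
    rw [e2] at h1
    simp only [hF, ZMod.val_natCast] at h1
    rw [Nat.mod_eq_of_lt (by omega : n - 1 < n), Nat.mod_eq_of_lt (by omega : g - 1 < n)] at h1
    rw [if_neg (by omega : ¬ (n - 1 + i < n))] at h1
    by_contra hc
    rw [if_pos (by omega)] at h1
    omega
  omega


lemma greedy_eq_iff (n i : ℕ) (L : ℕ) {p q : ℕ} (hp : p < n) (hq : q < n) :
    greedy n i L p = greedy n i L q ↔
      ∀ t, t < L → ((p + t * i) % n + i < n ↔ (q + t * i) % n + i < n) := by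
  have hn : 0 < n := by omega
  induction L generalizing p q with
  | zero =>
    simp only [greedy]
    constructor
    · intro _ t ht
      exact absurd ht (by omega)
    · intro _
      trivial
  | succ L ih =>
    have ihh := ih (p := (p + i) % n) (q := (q + i) % n) (Nat.mod_lt (p+i) hn) (Nat.mod_lt (q+i) hn)
    constructor
    · intro hcons
      rw [greedy, greedy] at hcons
      obtain ⟨h0, hrec⟩ := List.cons_eq_cons.mp hcons
      replace h0 := decide_eq_decide.mp h0
      replace hrec := ihh.mp hrec
      intro t ht
      match t with
      | 0 =>
        simpa [Nat.mod_eq_of_lt hp, Nat.mod_eq_of_lt hq] using h0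
      | (t + 1) =>
        have h' := hrec t (by omega)
        rwa [shift_mod, shift_mod] at h'
    · intro hall
      rw [greedy, greedy]
      refine List.cons_eq_cons.mpr ⟨decide_eq_decide.mpr ?_, ihh.mpr ?_⟩
      · have h' := hall 0 (by omega)
        simpa [Nat.mod_eq_of_lt hp, Nat.mod_eq_of_lt hq] using h'
      · intro t ht
        rw [shift_mod, shift_mod]
        exact hall (t + 1) (by omega)

lemma greedy_inj (n i : ℕ) (hi : 0 < i) (hin : i < n) (hgcd : Nat.gcd n i = 1) {L p q : ℕ}
    (hL : n - 1 ≤ L) (hp : p < n) (hq : q < n)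
    (h : greedy n i L p = greedy n i L q) : p = q := by
  have hn : 2 ≤ n := by omega
  apply zmod_core n i hi hin hgcd hp hq
  intro t ht
  exact (greedy_eq_iff n i L hp hq).mp h t (by omega)


lemma mod_cancel (n i : ℕ) (hin : i < n) (hgcd : Nat.gcd n i = 1) {s t : ℕ}
    (h : (s * i) % n = (t * i) % n) : s % n = t % n := by
  haveI : NeZero n := ⟨by omega⟩
  have hcast : ((s * i : ℕ) : ZMod n) = ((t * i : ℕ) : ZMod n) :=
    (ZMod.natCast_eq_natCast_iff' _ _ _).mpr h
  push_cast at hcast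
  have hu : IsUnit ((i : ℕ) : ZMod n) := by
    rw [ZMod.isUnit_iff_coprime]
    rwa [Nat.Coprime, Nat.gcd_comm]
  exact (ZMod.natCast_eq_natCast_iff' s t n).mp (hu.mul_right_cancel hcast)

lemma shift_cancel (n i : ℕ) (hin : i < n) (hgcd : Nat.gcd n i = 1) {p s t : ℕ}
    (h : (p + s * i) % n = (p + t * i) % n) : s % n = t % n := by
  haveI : NeZero n := ⟨by omega⟩
  have hcast : ((p + s * i : ℕ) : ZMod n) = ((p + t * i : ℕ) : ZMod n) :=
    (ZMod.natCast_eq_natCast_iff' _ _ _).mpr h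
  push_cast at hcast
  have h2 := add_left_cancel hcast
  have hu : IsUnit ((i : ℕ) : ZMod n) := by
    rw [ZMod.isUnit_iff_coprime]
    rwa [Nat.Coprime, Nat.gcd_comm]
  exact (ZMod.natCast_eq_natCast_iff' s t n).mp (hu.mul_right_cancel h2)

lemma mod_bound {n c len : ℕ} (hn : 0 < n) (h : len % n = c) (hne : len ≠ c) : n + c ≤ len := by
  have hdiv := Nat.div_add_mod len n
  rcases Nat.eq_zero_or_pos (len / n) with h0 | h0
  · rw [h0, Nat.mul_zero] at hdiv
    omega
  · have := Nat.le_mul_of_pos_right n h0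
    omega

lemma greedy_share (n i : ℕ) (hi : 0 < i) (hin : i < n) (hgcd : Nat.gcd n i = 1) {c : ℕ}
    (hc : c ≤ n - 2) : greedy n i c (i - 1) = greedy n i c i := by
  have hn : 2 ≤ n := by omega
  rw [greedy_eq_iff n i c (by omega) hin]
  intro t ht
  have ht3 : t ≤ n - 3 := by omega
  set x := (i - 1 + t * i) % n with hx
  have hxlt : x < n := Nat.mod_lt _ (by omega)
  have h2 : (i + t * i) % n = (x + 1) % n := by
    rw [show i + t * i = (i - 1 + t * i) + 1 by omega, ← Nat.mod_add_mod, ← hx]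
  have hx1 : x ≠ n - 1 := by
    intro hx1
    have e : ((t + 1) * i) % n = 0 := by
      rw [show (t + 1) * i = (i - 1 + t * i) + 1 by rw [Nat.succ_mul]; omega,
        ← Nat.mod_add_mod, ← hx, hx1, show n - 1 + 1 = n by omega, Nat.mod_self]
    have hcan := mod_cancel n i hin hgcd (s := t + 1) (t := 0) (by rw [e]; simp)
    rw [Nat.zero_mod, Nat.mod_eq_of_lt (by omega)] at hcan
    omega
  have hx2 : x ≠ n - i - 1 := by
    intro hx2
    have e : ((t + 2) * i) % n = 0 := by
      rw [show (t + 2) * i = (i - 1 + t * i) + (i + 1) by rw [Nat.add_mul]; omega,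
        ← Nat.mod_add_mod, ← hx, hx2, show n - i - 1 + (i + 1) = n by omega, Nat.mod_self]
    have hcan := mod_cancel n i hin hgcd (s := t + 2) (t := 0) (by rw [e]; simp)
    rw [Nat.zero_mod, Nat.mod_eq_of_lt (by omega)] at hcan
    omega
  rw [h2]
  have hxe : x + 1 < n := by omega
  rw [Nat.mod_eq_of_lt hxe]
  omega

lemma step_mem (n i : ℕ) (x : Bool) :
    step n i x ∈ ({jordan n ^ i, (jordan n)ᵀ ^ (n - i)} : Set (Matrix (Fin n) (Fin n) ℂ)) := by
  cases x with
  | true => left; rw [step, if_pos rfl]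
  | false => right; rw [step, if_neg (by simp)]; exact rfl

lemma exists_bools {n i : ℕ} (w : List (Matrix (Fin n) (Fin n) ℂ))
    (hw : ∀ x ∈ w, x ∈ ({jordan n ^ i, (jordan n)ᵀ ^ (n - i)} : Set (Matrix (Fin n) (Fin n) ℂ))) :
    ∃ bs : List Bool, w = bs.map (step n i) := by
  induction w with
  | nil => exact ⟨[], rfl⟩
  | cons x t ih =>
    obtain ⟨bs, hbs⟩ := ih (fun y hy => hw y (List.mem_cons_of_mem x hy))
    rcases hw x (List.mem_cons_self) with hx | hx
    · exact ⟨true :: bs, by rw [List.map_cons, ← hbs, hx]; rfl⟩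
    · exact ⟨false :: bs, by rw [List.map_cons, ← hbs]; simp only [Set.mem_singleton_iff] at hx
                             rw [hx]; rfl⟩

def entryLM (n : ℕ) (a b : Fin n) : Matrix (Fin n) (Fin n) ℂ →ₗ[ℂ] ℂ where
  toFun M := M a b
  map_add' _ _ := rfl
  map_smul' _ _ := rfl

@[simp] lemma entryLM_apply (n : ℕ) (a b : Fin n) (M : Matrix (Fin n) (Fin n) ℂ) :
    entryLM n a b M = M a b := rfl

lemma word_unit (n i : ℕ) (hi : 0 < i) (hin : i < n) (hgcd : Nat.gcd n i = 1)
    (a b : Fin n) : ∃ L : ℕ, n - 1 ≤ L ∧ L ≤ 2 * n - 2 ∧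
      wordProd n i (greedy n i L (a : ℕ)) = Matrix.single a b (1 : ℂ) := by
  have hn : 2 ≤ n := by omega
  haveI : NeZero n := ⟨by omega⟩
  have hu : IsUnit ((i : ℕ) : ZMod n) := by
    rw [ZMod.isUnit_iff_coprime]
    rwa [Nat.Coprime, Nat.gcd_comm]
  have main : ∀ L : ℕ, n - 1 ≤ L → ((a : ℕ) + L * i) % n = (b : ℕ) →
      wordProd n i (greedy n i L (a : ℕ)) = Matrix.single a b 1 := by
    intro L hL hLb
    ext a' b'
    rw [wordProd_apply n i hin, greedy_length]
    simp only [Matrix.single, Matrix.of_apply]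
    by_cases ha' : a = a'
    · subst ha'
      by_cases hb' : b = b'
      · subst hb'
        rw [if_pos ⟨rfl, hLb.symm⟩, if_pos ⟨rfl, rfl⟩]
      · have hne1 : ¬(greedy n i L (a : ℕ) = greedy n i L (a : ℕ) ∧
            (b' : ℕ) = ((a : ℕ) + L * i) % n) := by
          rintro ⟨-, h2⟩
          exact hb' (Fin.ext (hLb.symm.trans h2.symm))
        rw [if_neg hne1, if_neg (by tauto)]
    · have hne1 : ¬(greedy n i L (a : ℕ) = greedy n i L (a' : ℕ) ∧
          (b' : ℕ) = ((a' : ℕ) + L * i) % n) := by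
        rintro ⟨h1, -⟩
        exact ha' (Fin.ext (greedy_inj n i hi hin hgcd hL a.isLt a'.isLt h1))
      rw [if_neg hne1, if_neg (by tauto)]
  have ht : ∃ t₀ : ℕ, t₀ < n ∧ ((a : ℕ) + t₀ * i) % n = (b : ℕ) := by
    set u := hu.unit with hu'
    set z : ZMod n := (((b : ℕ) : ZMod n) - ((a : ℕ) : ZMod n)) * ↑u⁻¹ with hz
    refine ⟨z.val, ZMod.val_lt z, ?_⟩
    have hcast : (((a : ℕ) + z.val * i : ℕ) : ZMod n) = ((b : ℕ) : ZMod n) := by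
      push_cast
      rw [ZMod.natCast_rightInverse z, hz, mul_assoc,
        show ((↑u⁻¹ : ZMod n) * ((i : ℕ) : ZMod n)) = 1 by
          rw [show ((i : ℕ) : ZMod n) = ↑u from (hu.unit_spec).symm]
          exact Units.inv_mul u]
      ring
    have hv := congrArg ZMod.val hcast
    rwa [ZMod.val_natCast, ZMod.val_natCast, Nat.mod_eq_of_lt b.isLt] at hv
  obtain ⟨t₀, ht₀n, ht₀⟩ := ht
  by_cases hcase : t₀ = n - 1
  · exact ⟨n - 1, le_refl _, by omega, main (n - 1) (le_refl _) (hcase ▸ ht₀)⟩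
  · refine ⟨t₀ + n, by omega, by omega, main (t₀ + n) (by omega) ?_⟩
    rw [Nat.add_mul, ← Nat.add_assoc, Nat.add_mul_mod_self_left]
    exact ht₀

end Stmt18

open Stmt18 in
/-- For `0 < i < n` with `gcd(n, i) = 1`, the span of words of length between `1` and
`2n - 2` in `S = {J_n^i, (J_nᵀ)^{n-i}}` is all of `M_n(ℂ)`; that is,
`l_0(S) = l(S) = 2n - 2` (lengths measured by stabilization of the word spans). -/
theorem stmt_18 (n i : ℕ) (hi : 0 < i) (hin : i < n) (hgcd : Nat.gcd n i = 1) :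
    let S : Set (Matrix (Fin n) (Fin n) ℂ) := {jordan n ^ i, (jordan n)ᵀ ^ (n - i)}
    wordSpan0 n (2 * n - 2) S = ⊤ ∧
      sInf {k | wordSpan0 n k S = wordSpan0 n (k + 1) S} = 2 * n - 2 ∧
      sInf {k | wordSpan n k S = wordSpan n (k + 1) S} = 2 * n - 2 := by
  intro S
  have hn : 2 ≤ n := by omega
  haveI : NeZero n := ⟨by omega⟩
  -- membership of greedy-word products
  have hmem0 : ∀ (kk L : ℕ) (p : ℕ), 1 ≤ L → L ≤ kk →
      wordProd n i (greedy n i L p) ∈ wordSpan0 n kk S := by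
    intro kk L p h1 h2
    apply Submodule.subset_span
    refine ⟨(greedy n i L p).map (step n i), ?_, ?_, ?_, rfl⟩
    · simpa [greedy_length] using h1
    · simpa [greedy_length] using h2
    · intro x hx
      obtain ⟨y, -, rfl⟩ := List.mem_map.mp hx
      exact step_mem n i y
  -- monotonicity
  have hmono : ∀ {k k' : ℕ}, k ≤ k' → wordSpan n k S ≤ wordSpan n k' S := by
    intro k k' hk
    apply Submodule.span_mono
    rintro M ⟨w, h1, h2, h3⟩
    exact ⟨w, h1.trans hk, h2, h3⟩
  have hmono0 : ∀ {k k' : ℕ}, k ≤ k' → wordSpan0 n k S ≤ wordSpan0 n k' S := by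
    intro k k' hk
    apply Submodule.span_mono
    rintro M ⟨w, h0, h1, h2, h3⟩
    exact ⟨w, h0, h1.trans hk, h2, h3⟩
  have hsub0 : ∀ k : ℕ, wordSpan0 n k S ≤ wordSpan n k S := by
    intro k
    apply Submodule.span_mono
    rintro M ⟨w, h0, h1, h2, h3⟩
    exact ⟨w, h1, h2, h3⟩
  -- vanishing of functionals on wordSpan
  have hkernel : ∀ (kk : ℕ) (φ : Matrix (Fin n) (Fin n) ℂ →ₗ[ℂ] ℂ),
      (∀ bs : List Bool, bs.length ≤ kk → φ (wordProd n i bs) = 0) →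
      ∀ M ∈ wordSpan n kk S, φ M = 0 := by
    intro kk φ hφ M hM
    have hle : wordSpan n kk S ≤ LinearMap.ker φ := by
      rw [wordSpan, Submodule.span_le]
      rintro M' ⟨w, hlen, hSw, rfl⟩
      obtain ⟨bs, rfl⟩ := exists_bools w hSw
      rw [List.length_map] at hlen
      exact LinearMap.mem_ker.mpr (hφ bs hlen)
    exact LinearMap.mem_ker.mp (hle hM)
  -- Part 1 : top
  have htop : wordSpan0 n (2 * n - 2) S = ⊤ := by
    rw [eq_top_iff]
    intro M _
    rw [Matrix.matrix_eq_sum_single M]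
    apply Submodule.sum_mem
    intro a _
    apply Submodule.sum_mem
    intro b _
    rw [show Matrix.single a b (M a b) = (M a b) • Matrix.single a b (1 : ℂ) by
      rw [Matrix.smul_single, smul_eq_mul, mul_one]]
    apply Submodule.smul_mem
    obtain ⟨L, hL1, hL2, hL3⟩ := word_unit n i hi hin hgcd a b
    rw [← hL3]
    exact hmem0 _ L _ (by omega) hL2
  -- strictness
  have hstrict : ∀ kk : ℕ, kk < 2 * n - 2 →
      ∃ W, W ∈ wordSpan0 n (kk + 1) S ∧ W ∉ wordSpan n kk S := by
    intro kk hkk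
    have hi1 : i - 1 < n := by omega
    set a0 : Fin n := ⟨i - 1, hi1⟩ with ha0
    set b0 : Fin n := ⟨((i - 1) + (kk + 1) * i) % n, Nat.mod_lt _ (by omega)⟩ with hb0
    refine ⟨wordProd n i (greedy n i (kk + 1) (i - 1)), hmem0 _ _ _ (by omega) (le_refl _), ?_⟩
    by_cases hcase : kk + 1 ≤ n - 1
    · -- short lengths: single entry functional
      have hvan : ∀ bs : List Bool, bs.length ≤ kk →
          (entryLM n a0 b0) (wordProd n i bs) = 0 := by
        intro bs hlen
        rw [entryLM_apply, wordProd_apply n i hin, if_neg]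
        rintro ⟨-, h2⟩
        have hpe : ((i - 1) + (kk + 1) * i) % n = ((i - 1) + bs.length * i) % n := h2
        have hcan := shift_cancel n i hin hgcd hpe
        rw [Nat.mod_eq_of_lt (by omega : bs.length < n),
          Nat.mod_eq_of_lt (by omega : kk + 1 < n)] at hcan
        omega
      intro hW
      have hker := hkernel kk (entryLM n a0 b0) hvan _ hW
      rw [entryLM_apply, wordProd_apply n i hin, greedy_length,
        if_pos ⟨rfl, rfl⟩] at hker
      exact one_ne_zero hker
    · -- long lengths
      have hknn : n ≤ kk + 1 := by omega
      have hcn : kk + 1 - n ≤ n - 2 := by omega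
      set c : ℕ := kk + 1 - n with hc
      set a1 : Fin n := ⟨i, hin⟩ with ha1
      set b1 : Fin n := ⟨(i + (kk + 1) * i) % n, Nat.mod_lt _ (by omega)⟩ with hb1
      have hvan : ∀ bs : List Bool, bs.length ≤ kk →
          (entryLM n a0 b0 - entryLM n a1 b1) (wordProd n i bs) = 0 := by
        intro bs hlen
        rw [LinearMap.sub_apply, entryLM_apply, entryLM_apply,
          wordProd_apply n i hin, wordProd_apply n i hin]
        by_cases hLc : bs.length = c
        · have hb0c : (b0 : ℕ) = ((i - 1) + bs.length * i) % n := by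
            show ((i - 1) + (kk + 1) * i) % n = _
            rw [hLc, show kk + 1 = c + n by omega, Nat.add_mul, ← Nat.add_assoc,
              Nat.add_mul_mod_self_left]
          have hb1c : (b1 : ℕ) = (i + bs.length * i) % n := by
            show (i + (kk + 1) * i) % n = _
            rw [hLc, show kk + 1 = c + n by omega, Nat.add_mul, ← Nat.add_assoc,
              Nat.add_mul_mod_self_left]
          have hshare : greedy n i bs.length ((a0 : ℕ)) = greedy n i bs.length ((a1 : ℕ)) := by
            show greedy n i bs.length (i - 1) = greedy n i bs.length i
            rw [hLc]
            exact greedy_share n i hi hin hgcd hcn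
          by_cases hbs : bs = greedy n i bs.length ((a0 : ℕ))
          · rw [if_pos ⟨hbs, hb0c⟩, if_pos ⟨hbs.trans hshare, hb1c⟩, sub_self]
          · rw [if_neg (by rintro ⟨h1, -⟩; exact hbs h1),
              if_neg (by rintro ⟨h1, -⟩; exact hbs (h1.trans hshare.symm)), sub_self]
        · have hnotc : ∀ p : ℕ, ¬ ((p + (kk + 1) * i) % n = (p + bs.length * i) % n) := by
            intro p hpe
            have hcan := shift_cancel n i hin hgcd hpe
            rw [show kk + 1 = n + c by omega, Nat.add_mod_left,
              Nat.mod_eq_of_lt (by omega : c < n)] at hcan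
            have hge := mod_bound (by omega : 0 < n) hcan.symm hLc
            omega
          rw [if_neg (by rintro ⟨-, h2⟩; exact hnotc (i - 1) h2),
            if_neg (by rintro ⟨-, h2⟩; exact hnotc i h2), sub_self]
      intro hW
      have hker := hkernel kk (entryLM n a0 b0 - entryLM n a1 b1) hvan _ hW
      rw [LinearMap.sub_apply, entryLM_apply, entryLM_apply,
        wordProd_apply n i hin, wordProd_apply n i hin, greedy_length,
        if_pos ⟨rfl, rfl⟩,
        if_neg (by
          rintro ⟨h1, -⟩
          have h2 := greedy_inj n i hi hin hgcd (L := kk + 1) (by omega)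
            (by omega : i - 1 < n) (by omega : i < n)
            (show greedy n i (kk + 1) (i - 1) = greedy n i (kk + 1) i from h1)
          omega),
        sub_zero] at hker
      exact one_ne_zero hker
  -- assemble
  refine ⟨htop, ?_, ?_⟩
  · apply le_antisymm
    · apply Nat.sInf_le
      show wordSpan0 n (2 * n - 2) S = wordSpan0 n (2 * n - 2 + 1) S
      rw [htop]
      exact (eq_top_iff.mpr (htop ▸ hmono0 (by omega))).symm
    · apply le_csInf ⟨2 * n - 2, by
        show wordSpan0 n (2 * n - 2) S = wordSpan0 n (2 * n - 2 + 1) S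
        rw [htop]
        exact (eq_top_iff.mpr (htop ▸ hmono0 (by omega))).symm⟩
      intro m hm
      by_contra hlt
      push_neg at hlt
      obtain ⟨W, hW1, hW2⟩ := hstrict m (by omega)
      have : W ∈ wordSpan0 n m S := hm ▸ hW1
      exact hW2 (hsub0 m this)
  · apply le_antisymm
    · apply Nat.sInf_le
      have htopw : wordSpan n (2 * n - 2) S = ⊤ :=
        eq_top_iff.mpr (htop ▸ hsub0 (2 * n - 2))
      show wordSpan n (2 * n - 2) S = wordSpan n (2 * n - 2 + 1) S
      rw [htopw]
      exact (eq_top_iff.mpr (htopw ▸ hmono (by omega))).symm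
    · apply le_csInf ⟨2 * n - 2, by
        have htopw : wordSpan n (2 * n - 2) S = ⊤ :=
          eq_top_iff.mpr (htop ▸ hsub0 (2 * n - 2))
        show wordSpan n (2 * n - 2) S = wordSpan n (2 * n - 2 + 1) S
        rw [htopw]
        exact (eq_top_iff.mpr (htopw ▸ hmono (by omega))).symm⟩
      intro m hm
      by_contra hlt
      push_neg at hlt
      obtain ⟨W, hW1, hW2⟩ := hstrict m (by omega)
      have : W ∈ wordSpan n (m + 1) S := hsub0 (m + 1) hW1
      exact hW2 (hm ▸ this)
end

section
/- Let n and i be positive integers with i < n, let d = gcd(n, i), and let S = {J_n^i, (J_nᵀ)^{n−i}} ⊆ M_n(ℂ). For each k ≥ 0 let L_k(S) denote the ℂ-linear span of all products of at most k elements of S, including the empty product (the identity matrix). Then the least k such that L_k(S) = L_{k+1}(S) equals 2(n/d) − 2; that is, l(S) = 2n/d − 2. -/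
open Matrix

namespace S19


/-- the profile bit of block `j` at time `t` -/
def pio (u' v' m j t : ℕ) : Bool := decide ((j + t * u') % m < v')

/-- whether a word is "active" on block `j` -/
def okB (u' m : ℕ) : List Bool → ℕ → Bool
  | [], _ => true
  | b :: w, j => ((decide (j + u' < m)) == b) && okB u' m w ((j + u') % m)

/-- the canonical word of length `ℓ` for block `j` -/
def wjw (u' v' m j ℓ : ℕ) : List Bool := (List.range ℓ).map (pio u' v' m j)

section Comb
variable {u' v' m : ℕ}

lemma pio_shift (hm0 : 0 < m) (j t : ℕ) :
    pio u' v' m ((j + u') % m) t = pio u' v' m j (t + 1) := by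
  unfold pio
  congr 1
  rw [Nat.mod_add_mod]
  congr 1
  ring

lemma okB_spec (hm : u' + v' = m) :
    ∀ (w : List Bool) (j : ℕ), j < m →
      (okB u' m w j = true ↔ ∀ t (ht : t < w.length), w[t] = pio u' v' m j t) := by
  intro w
  induction w with
  | nil => intro j hj; simp [okB]
  | cons b w ih =>
    intro j hj
    have hm0 : 0 < m := lt_of_le_of_lt (Nat.zero_le j) hj
    have hj' : (j + u') % m < m := Nat.mod_lt _ hm0
    have hhead : (decide (j + u' < m)) = pio u' v' m j 0 := by
      unfold pio
      have h1 : (j + 0 * u') % m = j := by simp [Nat.mod_eq_of_lt hj]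
      rw [h1]
      by_cases h : j < v'
      · have h2 : j + u' < m := by omega
        simp [h, h2]
      · have h2 : ¬ (j + u' < m) := by omega
        simp [h, h2]
    constructor
    · intro h t ht
      rw [okB, Bool.and_eq_true, beq_iff_eq] at h
      match t with
      | 0 => simpa [hhead] using h.1.symm
      | t + 1 =>
        have := (ih _ hj').1 h.2 t (by simpa using ht)
        simpa [pio_shift hm0] using this
    · intro h
      rw [okB, Bool.and_eq_true, beq_iff_eq]
      constructor
      · rw [hhead]; exact (h 0 (by simp)).symm
      · rw [ih _ hj']
        intro t ht
        rw [pio_shift hm0]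
        exact h (t + 1) (by simpa using ht)

lemma wjw_length (j ℓ : ℕ) : (wjw u' v' m j ℓ).length = ℓ := by simp [wjw]

lemma wjw_get (j ℓ t : ℕ) (ht : t < (wjw u' v' m j ℓ).length) :
    (wjw u' v' m j ℓ)[t] = pio u' v' m j t := by
  simp [wjw]

lemma okB_wjw_self (hm : u' + v' = m) (j ℓ : ℕ) (hj : j < m) :
    okB u' m (wjw u' v' m j ℓ) j = true := by
  rw [okB_spec hm _ _ hj]
  intro t ht
  exact wjw_get j ℓ t ht

/-- full injectivity of the length `m-1` windows -/
lemma window_inj (hm : u' + v' = m) (hu : 0 < u') (hv : 0 < v')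
    (hco : Nat.Coprime u' m) :
    ∀ j j', j < m → j' < m →
      (∀ t, t < m - 1 → pio u' v' m j t = pio u' v' m j' t) → j = j' := by
  intro j j' hjm hj'm hagree
  have hm2 : 2 ≤ m := by omega
  haveI : NeZero m := ⟨by omega⟩
  set Z := ZMod m
  have hU : IsUnit ((u' : Z)) := (ZMod.isUnit_iff_coprime u' m).2 hco
  set U : Z := (u' : Z) with hUdef
  set δ : Z := (j' : Z) - (j : Z) with hδdef
  set z₀ : Z := (j : Z) + ((m - 1 : ℕ) : Z) * U with hz₀
  -- membership set
  set I : Finset Z := Finset.univ.filter (fun z => z.val < v') with hI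
  -- key invariance away from z₀
  have key : ∀ z : Z, z ≠ z₀ → (z ∈ I ↔ z + δ ∈ I) := by
    intro z hz
    set t : ℕ := ((z - (j : Z)) * U⁻¹).val with htdef
    have htm : t < m := ZMod.val_lt _
    have hcast : ((t : ℕ) : Z) = (z - (j : Z)) * U⁻¹ := ZMod.natCast_rightInverse _
    have hzt : (j : Z) + (t : ℕ) * U = z := by
      rw [hcast, mul_assoc, ZMod.inv_mul_of_unit U hU]
      ring
    have htne : t ≠ m - 1 := by
      intro h
      apply hz
      rw [hz₀, ← h, hzt]
    have ht1 : t < m - 1 := by omega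
    have := hagree t ht1
    unfold pio at this
    have hval : ∀ a : ℕ, ∀ s : ℕ, ((a + s * u') % m) = (((a : Z) + (s : ℕ) * U).val) := by
      intro a s
      have hc : (((a + s * u' : ℕ)) : Z) = (a : Z) + (s : ℕ) * U := by
        rw [hUdef]; show ((a + s * u' : ℕ) : ZMod m) = (a : ZMod m) + (s : ZMod m) * (u' : ZMod m); push_cast; ring
      rw [← hc, ZMod.val_natCast]
    -- translate hypothesis
    have h1 : (j + t * u') % m = z.val := by
      rw [hval j t, hzt]
    have h2 : (j' + t * u') % m = (z + δ).val := by
      rw [hval j' t]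
      congr 1
      rw [hδdef, ← hzt]
      ring
    rw [h1, h2] at this
    simp only [hI, Finset.mem_filter, Finset.mem_univ, true_and]
    exact decide_eq_decide.mp this
  -- invariance on all of I via cardinality
  have hIδ : ∀ z : Z, (z ∈ I ↔ z + δ ∈ I) := by
    classical
    set Iδ : Finset Z := Finset.univ.filter (fun z => z + δ ∈ I) with hIδdef
    have hmem : ∀ z : Z, z ∈ Iδ ↔ z + δ ∈ I := by
      intro z; simp [hIδdef]
    have hcard : Iδ.card = I.card := by
      have : Iδ = I.image (fun z => z - δ) := by
        ext z
        simp only [Finset.mem_image, hmem]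
        constructor
        · intro h; exact ⟨z + δ, h, by ring⟩
        · rintro ⟨y, hy, rfl⟩; simpa using hy
      rw [this]
      exact Finset.card_image_of_injective _ (sub_left_injective)
    have herase : I.erase z₀ = Iδ.erase z₀ := by
      ext z
      simp only [Finset.mem_erase]
      constructor
      · rintro ⟨hne, hz⟩; exact ⟨hne, (hmem z).2 ((key z hne).1 hz)⟩
      · rintro ⟨hne, hz⟩; exact ⟨hne, (key z hne).2 ((hmem z).1 hz)⟩
    have hfix : z₀ ∈ I ↔ z₀ ∈ Iδ := by
      by_cases h1 : z₀ ∈ I <;> by_cases h2 : z₀ ∈ Iδ <;> try tauto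
      · exfalso
        have c1 : (I.erase z₀).card + 1 = I.card := Finset.card_erase_add_one h1
        have c2 : Iδ.card = (Iδ.erase z₀).card := by
          rw [Finset.erase_eq_of_notMem h2]
        rw [herase] at c1; omega
      · exfalso
        have c1 : I.card = (I.erase z₀).card := by
          rw [Finset.erase_eq_of_notMem h1]
        have c2 : (Iδ.erase z₀).card + 1 = Iδ.card := Finset.card_erase_add_one h2
        rw [herase] at c1; omega
    intro z
    rcases eq_or_ne z z₀ with rfl | hne
    · rw [hfix]; exact hmem z₀
    · exact key z hne
  -- I is invariant under +δ, so summing gives card I • δ = 0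
  have hIimage : I.image (fun z => z + δ) = I := by
    apply Finset.eq_of_subset_of_card_le
    · intro z hz
      rcases Finset.mem_image.1 hz with ⟨y, hy, rfl⟩
      exact (hIδ y).1 hy
    · rw [Finset.card_image_of_injective _ (add_left_injective δ)]
  have hsum : ∑ z ∈ I, (z + δ) = ∑ z ∈ I, z := by
    conv_rhs => rw [← hIimage]
    rw [Finset.sum_image (fun x _ y _ h => add_left_injective δ h)]
  have hcardsmul : (I.card) • δ = 0 := by
    have h2 := hsum
    rw [Finset.sum_add_distrib, Finset.sum_const] at h2
    -- h2 : ∑ z, z + card • δ = ∑ z, z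
    have := add_left_cancel (a := ∑ z ∈ I, z) (b := I.card • δ) (c := 0) (by rw [add_zero]; exact h2)
    exact this
  have hcardI : I.card = v' := by
    have : I = (Finset.range v').image (fun y : ℕ => (y : Z)) := by
      ext z
      simp only [hI, Finset.mem_filter, Finset.mem_univ, true_and, Finset.mem_image,
        Finset.mem_range]
      constructor
      · intro h
        exact ⟨z.val, h, (ZMod.natCast_rightInverse z : _)⟩
      · rintro ⟨y, hy, rfl⟩
        rwa [ZMod.val_cast_of_lt (by omega)]
    rw [this, Finset.card_image_of_injOn, Finset.card_range]
    intro a ha b hb hab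
    simp only [Finset.mem_coe, Finset.mem_range] at ha hb
    have hab2 : ((a : ℕ) : Z) = ((b : ℕ) : Z) := hab
    have hval2 : ((a : ℕ) : Z).val = ((b : ℕ) : Z).val := by rw [hab2]
    rwa [ZMod.val_cast_of_lt (by omega), ZMod.val_cast_of_lt (by omega)] at hval2
  have hv'co : Nat.Coprime v' m := by
    have hg : Nat.gcd v' m ∣ u' := by
      have h1 : Nat.gcd v' m ∣ v' := Nat.gcd_dvd_left _ _
      have h2 : Nat.gcd v' m ∣ m := Nat.gcd_dvd_right _ _
      have : u' = m - v' := by omega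
      rw [this]; exact Nat.dvd_sub h2 h1
    have : Nat.gcd v' m ∣ Nat.gcd u' m := Nat.dvd_gcd hg (Nat.gcd_dvd_right _ _)
    rw [hco] at this
    exact Nat.eq_one_of_dvd_one this
  have hVunit : IsUnit ((v' : Z)) := (ZMod.isUnit_iff_coprime v' m).2 hv'co
  have hδ0 : δ = 0 := by
    have h3 : ((v' : Z)) * δ = 0 := by
      rw [← hcardI] at *
      rw [nsmul_eq_mul] at hcardsmul
      exact_mod_cast hcardsmul
    rcases hVunit with ⟨units, hu2⟩
    calc δ = (units⁻¹ : (ZMod m)ˣ) * ((v' : Z) * δ) := by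
              rw [← mul_assoc, ← hu2, Units.inv_mul, one_mul]
         _ = 0 := by rw [h3, mul_zero]
  have : ((j : Z)) = ((j' : Z)) := by
    have := hδ0
    rw [hδdef, sub_eq_zero] at this
    exact this.symm
  have hvv : ((j : ℕ) : Z).val = ((j' : ℕ) : Z).val := by rw [this]
  rwa [ZMod.val_cast_of_lt hjm, ZMod.val_cast_of_lt hj'm] at hvv

def jone (u' v' m : ℕ) : ℕ := (v' - 1 + 2 * u') % m
def jtwo (u' v' m : ℕ) : ℕ := (jone u' v' m + 1) % m

lemma jone_lt (hm0 : 0 < m) : jone u' v' m < m := Nat.mod_lt _ hm0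
lemma jtwo_lt (hm0 : 0 < m) : jtwo u' v' m < m := Nat.mod_lt _ hm0

lemma jone_shift (hm0 : 0 < m) (t : ℕ) :
    (jone u' v' m + t * u') % m = (v' - 1 + (t + 2) * u') % m := by
  unfold jone
  rw [Nat.mod_add_mod]
  congr 1
  ring

lemma jtwo_shift (hm0 : 0 < m) (t : ℕ) :
    (jtwo u' v' m + t * u') % m = ((jone u' v' m + t * u') % m + 1) % m := by
  unfold jtwo
  rw [Nat.mod_add_mod, Nat.add_right_comm, ← Nat.mod_add_mod]

lemma not_cong (hm : u' + v' = m) (hco : Nat.Coprime u' m) {s : ℕ}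
    (hs1 : 0 < s) (hs2 : s < m) : ¬ ((v' - 1 + s * u') % m = (v' - 1 + 0 * u') % m) := by
  intro h
  have hmod : (v' - 1 + s * u') ≡ (v' - 1 + 0 * u') [MOD m] := h
  have h2 : s * u' ≡ 0 * u' [MOD m] := Nat.ModEq.add_left_cancel' _ hmod
  rw [Nat.zero_mul, Nat.modEq_zero_iff_dvd] at h2
  have h3 : m ∣ s := (Nat.Coprime.dvd_of_dvd_mul_right (Nat.Coprime.symm hco)) h2
  have := Nat.le_of_dvd hs1 h3
  omega

lemma P7agree (hm : u' + v' = m) (hu : 0 < u') (hv : 0 < v') (hco : Nat.Coprime u' m) :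
    ∀ t, t < m - 2 → pio u' v' m (jone u' v' m) t = pio u' v' m (jtwo u' v' m) t := by
  intro t ht
  have hm0 : 0 < m := by omega
  set y := (jone u' v' m + t * u') % m with hy
  have hym : y < m := Nat.mod_lt _ hm0
  have hy1 : y ≠ v' - 1 := by
    intro h
    apply not_cong hm hco (s := t + 2) (by omega) (by omega)
    rw [← jone_shift hm0, ← hy, h]
    simp [Nat.mod_eq_of_lt (show v' - 1 < m by omega)]
  have hy2 : y ≠ m - 1 := by
    intro h
    -- (v'-1 + (t+2)u') ≡ m-1  and  (v'-1 + u') % m = m - 1 since v'-1+u' = m-1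
    have hbase : (v' - 1 + 1 * u') % m = m - 1 := by
      rw [Nat.one_mul, Nat.mod_eq_of_lt (by omega)]
      omega
    apply not_cong hm hco (s := t + 1) (by omega) (by omega)
    have e1 : (v' - 1 + (t + 2) * u') % m = m - 1 := by rw [← jone_shift hm0, ← hy, h]
    -- subtract one u': (t+2)u' ≡ 1*u' mod m hence (t+1)u' ≡ 0
    have h2 : (v' - 1 + (t + 2) * u') ≡ (v' - 1 + 1 * u') [MOD m] := by
      unfold Nat.ModEq
      rw [e1, hbase]
    have h3 : (t + 2) * u' ≡ 1 * u' [MOD m] := Nat.ModEq.add_left_cancel' _ h2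
    have h4 : (v' - 1) + (t + 2) * u' ≡ (v' - 1) + 1 * u' [MOD m] := Nat.ModEq.add_left _ h3
    -- now turn into (t+1)*u' ≡ 0*u'
    have h5 : (t + 1) * u' + 1 * u' ≡ 0 * u' + 1 * u' [MOD m] := by
      calc (t + 1) * u' + 1 * u' = (t + 2) * u' := by ring
        _ ≡ 1 * u' [MOD m] := h3
        _ = 0 * u' + 1 * u' := by ring
    have h6 : (t + 1) * u' ≡ 0 * u' [MOD m] := Nat.ModEq.add_right_cancel' _ h5
    have h7 : (v' - 1) + (t + 1) * u' ≡ (v' - 1) + 0 * u' [MOD m] := Nat.ModEq.add_left _ h6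
    exact h7
  have hy2' : (jtwo u' v' m + t * u') % m = y + 1 := by
    rw [jtwo_shift hm0, ← hy, Nat.mod_eq_of_lt (by omega)]
  unfold pio
  rw [← hy, hy2']
  by_cases hc : y < v' - 1
  · have h1 : y < v' := by omega
    have h2 : y + 1 < v' := by omega
    simp [h1, h2]
  · have h1 : ¬ (y < v') := by omega
    have h2 : ¬ (y + 1 < v') := by omega
    simp [h1, h2]

lemma P7diff (hm : u' + v' = m) (hu : 0 < u') (hv : 0 < v') (hco : Nat.Coprime u' m) :
    pio u' v' m (jone u' v' m) (m - 2) = true ∧ pio u' v' m (jtwo u' v' m) (m - 2) = false := by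
  have hm0 : 0 < m := by omega
  have hm2 : 2 ≤ m := by omega
  have key : (jone u' v' m + (m - 2) * u') % m = v' - 1 := by
    rw [jone_shift hm0]
    have : m - 2 + 2 = m := by omega
    rw [this]
    -- (v' - 1 + m * u') % m = v' - 1
    rw [Nat.add_mul_mod_self_left]
    exact Nat.mod_eq_of_lt (by omega)
  constructor
  · unfold pio
    rw [key]
    simp
    omega
  · unfold pio
    rw [jtwo_shift hm0, key]
    rw [Nat.mod_eq_of_lt (by omega)]
    simp
    omega

end Comb


def Pmat (n i : ℕ) : Matrix (Fin n) (Fin n) ℂ :=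
  Matrix.of fun a b => if ((a : ℕ) + i) % n = (b : ℕ) then 1 else 0

def ff (n i : ℕ) (b : Bool) (a : Fin n) : ℂ :=
  if decide ((a : ℕ) + i < n) = b then 1 else 0

noncomputable def Mb (n i : ℕ) (b : Bool) : Matrix (Fin n) (Fin n) ℂ :=
  Matrix.diagonal (ff n i b) * Pmat n i

def sig (i : ℕ) {n : ℕ} (a : Fin n) : Fin n :=
  ⟨((a : ℕ) + i) % n, Nat.mod_lt _ a.pos⟩

def fDl (n i : ℕ) : List Bool → Fin n → ℂ
  | [], _ => 1
  | b :: w, a => ff n i b a * fDl n i w (sig i a)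

noncomputable def Wrd (n i : ℕ) (w : List Bool) : Matrix (Fin n) (Fin n) ℂ :=
  Matrix.diagonal (fDl n i w) * (Pmat n i) ^ w.length

section Mat
variable {n i : ℕ}

lemma jordan_pow_apply (k : ℕ) (a b : Fin n) :
    (jordan n ^ k) a b = if (a : ℕ) + k = (b : ℕ) then 1 else 0 := by
  induction k generalizing a b with
  | zero =>
    rw [pow_zero, Matrix.one_apply]
    simp [Fin.ext_iff]
  | succ k ih =>
    rw [pow_succ, Matrix.mul_apply]
    by_cases hc : (a : ℕ) + (k + 1) = (b : ℕ)
    · have hcklt : (a : ℕ) + k < n := by omega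
      set c₀ : Fin n := ⟨(a : ℕ) + k, hcklt⟩ with hc₀
      rw [Finset.sum_eq_single c₀]
      · rw [ih, jordan]
        simp only [Matrix.of_apply]
        have h2 : (a : ℕ) + k + 1 = (b : ℕ) := by omega
        simp [hc₀, h2, hc]
      · intro c _ hne
        rw [ih]
        have : ¬ ((a : ℕ) + k = (c : ℕ)) := by
          intro h; exact hne (by apply Fin.ext; simp [hc₀, ← h])
        simp [this]
      · intro h; exact absurd (Finset.mem_univ c₀) h
    · rw [if_neg hc]
      apply Finset.sum_eq_zero
      intro c _
      rw [ih, jordan]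
      by_cases h1 : (a : ℕ) + k = (c : ℕ)
      · have : ¬ ((c : ℕ) + 1 = (b : ℕ)) := by omega
        simp [this]
      · simp [h1]

lemma jordan_transpose_pow_apply (k : ℕ) (a b : Fin n) :
    ((jordan n)ᵀ ^ k) a b = if (b : ℕ) + k = (a : ℕ) then 1 else 0 := by
  rw [← Matrix.transpose_pow, Matrix.transpose_apply, jordan_pow_apply]

lemma A_eq (hin : i < n) : jordan n ^ i = Mb n i true := by
  ext a b
  rw [jordan_pow_apply, Mb, Matrix.diagonal_mul, ff, Pmat]
  simp only [Matrix.of_apply]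
  have hbn : (b : ℕ) < n := b.isLt
  by_cases h : (a : ℕ) + i < n
  · rw [if_pos (show decide ((a : ℕ) + i < n) = true by simp [h]), one_mul,
      Nat.mod_eq_of_lt h]
  · rw [if_neg (show ¬ decide ((a : ℕ) + i < n) = true by simp [h]), zero_mul,
      if_neg (by omega)]

lemma B_eq (hi : 0 < i) (hin : i < n) : (jordan n)ᵀ ^ (n - i) = Mb n i false := by
  ext a b
  rw [jordan_transpose_pow_apply, Mb, Matrix.diagonal_mul, ff, Pmat]
  simp only [Matrix.of_apply]
  have han : (a : ℕ) < n := a.isLt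
  have hbn : (b : ℕ) < n := b.isLt
  by_cases h : (a : ℕ) + i < n
  · rw [if_neg (show ¬ decide ((a : ℕ) + i < n) = false by simp [h]), zero_mul,
      if_neg (by omega)]
  · rw [if_pos (show decide ((a : ℕ) + i < n) = false by simp [h]), one_mul]
    have hmod : ((a : ℕ) + i) % n = (a : ℕ) + i - n := by
      rw [Nat.mod_eq_sub_mod (by omega), Nat.mod_eq_of_lt (by omega)]
    rw [hmod]
    by_cases h2 : (b : ℕ) + (n - i) = (a : ℕ)
    · rw [if_pos h2, if_pos (by omega)]
    · rw [if_neg h2, if_neg (by omega)]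

lemma Pmat_mul_diag (g : Fin n → ℂ) :
    Pmat n i * Matrix.diagonal g = Matrix.diagonal (fun a => g (sig i a)) * Pmat n i := by
  ext a b
  rw [Matrix.mul_diagonal, Matrix.diagonal_mul, Pmat]
  simp only [Matrix.of_apply]
  by_cases h : ((a : ℕ) + i) % n = (b : ℕ)
  · rw [if_pos h]
    have hsig : sig i a = b := Fin.ext h
    rw [hsig]
    ring
  · rw [if_neg h]; ring

lemma Wrd_eq (w : List Bool) : (w.map (Mb n i)).prod = Wrd n i w := by
  induction w with
  | nil => simp [Wrd, fDl]
  | cons b w ih =>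
    rw [List.map_cons, List.prod_cons, ih, Wrd, Wrd, Mb]
    have : Matrix.diagonal (ff n i b) * Pmat n i * (Matrix.diagonal (fDl n i w) * Pmat n i ^ w.length)
        = Matrix.diagonal (ff n i b) * (Pmat n i * Matrix.diagonal (fDl n i w)) * Pmat n i ^ w.length := by
      noncomm_ring
    rw [this, Pmat_mul_diag, ← mul_assoc, Matrix.diagonal_mul_diagonal]
    have hlen : (b :: w).length = w.length + 1 := rfl
    rw [hlen, pow_succ']
    have : (fun a => ff n i b a * fDl n i w (sig i a)) = fDl n i (b :: w) := by
      funext a; rfl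
    rw [mul_assoc, this]

lemma Pmat_pow_apply (k : ℕ) (a b : Fin n) :
    ((Pmat n i) ^ k) a b = if ((a : ℕ) + k * i) % n = (b : ℕ) then 1 else 0 := by
  induction k generalizing a b with
  | zero =>
    rw [pow_zero, Matrix.one_apply]
    have h0 : ((a : ℕ) + 0 * i) % n = (a : ℕ) := by
      simp [Nat.mod_eq_of_lt a.isLt]
    rw [h0]
    by_cases h : a = b
    · subst h; simp
    · rw [if_neg h, if_neg (fun hc => h (Fin.ext hc))]
  | succ k ih =>
    rw [pow_succ, Matrix.mul_apply]
    have hn0 : 0 < n := a.pos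
    set c₀ : Fin n := ⟨((a : ℕ) + k * i) % n, Nat.mod_lt _ hn0⟩ with hc₀
    rw [Finset.sum_eq_single c₀]
    · rw [ih, if_pos rfl, one_mul, Pmat]
      simp only [Matrix.of_apply]
      have harith : (((a : ℕ) + k * i) % n + i) % n = ((a : ℕ) + (k + 1) * i) % n := by
        rw [Nat.mod_add_mod]
        congr 1
        ring
      rw [show ((c₀ : ℕ) + i) % n = (((a : ℕ) + k * i) % n + i) % n from rfl, harith]
    · intro c _ hne
      rw [ih, if_neg, zero_mul]
      intro h
      apply hne
      apply Fin.ext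
      exact h.symm
    · intro h; exact absurd (Finset.mem_univ c₀) h

end Mat




section Blocks
variable {n i d m u' : ℕ}

lemma NL2 {r q : ℕ} (hr : r < d) (hd0 : 0 < d) : r + d * q < d * m ↔ q < m := by
  constructor
  · intro h
    by_contra hc
    push_neg at hc
    have h2 : d * m ≤ d * q := Nat.mul_le_mul_left d hc
    omega
  · intro h
    have h2 : d * (q + 1) ≤ d * m := Nat.mul_le_mul_left d h
    have h3 : d * (q + 1) = d * q + d := by ring
    omega

lemma NL1 {r q : ℕ} (hr : r < d) (hd0 : 0 < d) (hm0 : 0 < m) :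
    (r + d * q) % (d * m) = r + d * (q % m) := by
  conv_lhs => rw [show q = m * (q / m) + q % m from (Nat.div_add_mod q m).symm]
  have h1 : r + d * (m * (q / m) + q % m) = r + d * (q % m) + (d * m) * (q / m) := by ring
  rw [h1, Nat.add_mul_mod_self_left]
  apply Nat.mod_eq_of_lt
  have h2 : q % m < m := Nat.mod_lt _ hm0
  have h3 : d * (q % m + 1) ≤ d * m := Nat.mul_le_mul_left d (by omega)
  have h4 : d * (q % m + 1) = d * (q % m) + d := by ring
  omega

lemma blk_lt (hd0 : 0 < d) (hn : n = d * m) (a : Fin n) : (a : ℕ) / d < m := by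
  have ha : (a : ℕ) < d * m := by rw [← hn]; exact a.isLt
  have := Nat.div_add_mod (a : ℕ) d
  have hr : (a : ℕ) % d < d := Nat.mod_lt _ hd0
  rw [← NL2 (q := (a : ℕ) / d) hr hd0]
  omega

lemma cond_blk (hd0 : 0 < d) (hn : n = d * m) (hi' : i = d * u') (a : Fin n) :
    ((a : ℕ) + i < n) ↔ ((a : ℕ) / d + u' < m) := by
  have ha := Nat.div_add_mod (a : ℕ) d
  have hr : (a : ℕ) % d < d := Nat.mod_lt _ hd0
  have h1 : (a : ℕ) + i = (a : ℕ) % d + d * ((a : ℕ) / d + u') := by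
    rw [hi']; have : d * ((a : ℕ) / d + u') = d * ((a : ℕ) / d) + d * u' := by ring
    omega
  have h2 := NL2 (d := d) (m := m) (r := (a : ℕ) % d) (q := (a : ℕ) / d + u') hr hd0
  constructor
  · intro h; exact h2.1 (by omega)
  · intro h; have := h2.2 h; omega

lemma sig_blk (hd0 : 0 < d) (hn : n = d * m) (hi' : i = d * u') (hm0 : 0 < m) (a : Fin n) :
    ((sig i a : Fin n) : ℕ) / d = ((a : ℕ) / d + u') % m := by
  have ha := Nat.div_add_mod (a : ℕ) d
  have hr : (a : ℕ) % d < d := Nat.mod_lt _ hd0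
  have h1 : ((sig i a : Fin n) : ℕ) = ((a : ℕ) + i) % n := rfl
  have h2 : (a : ℕ) + i = (a : ℕ) % d + d * ((a : ℕ) / d + u') := by
    rw [hi']; have : d * ((a : ℕ) / d + u') = d * ((a : ℕ) / d) + d * u' := by ring
    omega
  obtain ⟨av, hav⟩ : ∃ av : ℕ, (a : ℕ) = av := ⟨_, rfl⟩
  rw [hav] at ha hr h1 h2 ⊢
  have h4 : (av + i) % n = av % d + d * ((av / d + u') % m) := by
    rw [h2, hn]
    exact NL1 hr hd0 hm0
  rw [h1, h4]
  rw [Nat.add_mul_div_left _ _ hd0]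
  have h3 : av % d / d = 0 := Nat.div_eq_of_lt hr
  omega

lemma fDl_okB (hd0 : 0 < d) (hn : n = d * m) (hi' : i = d * u') (hm0 : 0 < m) :
    ∀ (w : List Bool) (a : Fin n),
      fDl n i w a = if okB u' m w ((a : ℕ) / d) = true then 1 else 0 := by
  intro w
  induction w with
  | nil => intro a; simp [fDl, okB]
  | cons b w ih =>
    intro a
    rw [fDl, ff, ih (sig i a), sig_blk hd0 hn hi' hm0, okB]
    have hc : decide ((a : ℕ) + i < n) = decide ((a : ℕ) / d + u' < m) := by
      apply decide_eq_decide.mpr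
      exact cond_blk hd0 hn hi' a
    rw [hc]
    by_cases h1 : decide ((a : ℕ) / d + u' < m) = b
    · by_cases h2 : okB u' m w (((a : ℕ) / d + u') % m) = true
      · simp [h1, h2]
      · simp [h1, h2]
    · simp [h1]

end Blocks



section Spans
variable {n i d m u' v' : ℕ}

lemma Pmat_pow_m (hd0 : 0 < d) (hn : n = d * m) (hi' : i = d * u') :
    (Pmat n i) ^ m = 1 := by
  ext a b
  rw [Pmat_pow_apply, Matrix.one_apply]
  have h0 : m * i = n * u' := by rw [hn, hi']; ring
  have h1 : (a : ℕ) + m * i = (a : ℕ) + n * u' := by omega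
  rw [h1, Nat.add_mul_mod_self_left, Nat.mod_eq_of_lt a.isLt]
  by_cases h : a = b
  · subst h; simp
  · rw [if_neg h, if_neg (fun hc => h (Fin.ext hc))]

lemma Pmat_pow_congr (hd0 : 0 < d) (hn : n = d * m) (hi' : i = d * u') (hm0 : 0 < m)
    {L L' : ℕ} (h : L % m = L' % m) : (Pmat n i) ^ L = (Pmat n i) ^ L' := by
  have e : ∀ K : ℕ, (Pmat n i) ^ K = (Pmat n i) ^ (K % m) := by
    intro K
    conv_lhs => rw [show K = m * (K / m) + K % m from (Nat.div_add_mod K m).symm]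
    rw [pow_add, pow_mul, Pmat_pow_m hd0 hn hi', one_pow, one_mul]
  rw [e L, e L', h]

lemma mod_shift (hd0 : 0 < d) (hn : n = d * m) (hi' : i = d * u') (hm0 : 0 < m)
    (x : ℕ) {L L' : ℕ} (h : L % m = L' % m) :
    (x + L * i) % n = (x + L' * i) % n := by
  have key : ∀ K : ℕ, (x + K * i) % n = (x + (K % m) * i) % n := by
    intro K
    conv_lhs => rw [show K = m * (K / m) + K % m from (Nat.div_add_mod K m).symm]
    have h2 : x + (m * (K / m) + K % m) * i = x + (K % m) * i + n * (u' * (K / m)) := by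
      rw [hn, hi']; ring
    rw [h2, Nat.add_mul_mod_self_left]
  rw [key L, key L', h]

lemma Wrd_apply (w : List Bool) (a b : Fin n) :
    Wrd n i w a b
      = fDl n i w a * (if ((a : ℕ) + w.length * i) % n = (b : ℕ) then 1 else 0) := by
  rw [Wrd, Matrix.diagonal_mul, Pmat_pow_apply]

lemma fDl_wjw (hd0 : 0 < d) (hn : n = d * m) (hi' : i = d * u')
    (hm : u' + v' = m) (hu : 0 < u') (hv : 0 < v') (hco : Nat.Coprime u' m)
    {j L : ℕ} (hj : j < m) (hL : m - 1 ≤ L) (a : Fin n) :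
    fDl n i (wjw u' v' m j L) a = if (a : ℕ) / d = j then 1 else 0 := by
  have hm0 : 0 < m := by omega
  rw [fDl_okB hd0 hn hi' hm0]
  have hblk : (a : ℕ) / d < m := blk_lt hd0 hn a
  by_cases h : (a : ℕ) / d = j
  · rw [if_pos h, if_pos]
    rw [h]
    exact okB_wjw_self hm j L hj
  · rw [if_neg h, if_neg]
    intro hok
    apply h
    apply window_inj hm hu hv hco _ _ hblk hj
    intro t ht
    have ht' : t < (wjw u' v' m j L).length := by rw [wjw_length]; omega
    have := (okB_spec hm _ _ hblk).1 hok t ht'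
    rw [wjw_get] at this
    exact this.symm

/-- generators expressed through boolean words -/
def GenB (n i k : ℕ) : Set (Matrix (Fin n) (Fin n) ℂ) :=
  {M | ∃ w : List Bool, w.length ≤ k ∧ M = Wrd n i w}

lemma words_set_eq (hi : 0 < i) (hin : i < n) (k : ℕ) :
    {M : Matrix (Fin n) (Fin n) ℂ | ∃ w : List (Matrix (Fin n) (Fin n) ℂ),
        w.length ≤ k ∧ (∀ x ∈ w, x ∈ ({jordan n ^ i, (jordan n)ᵀ ^ (n - i)} :
          Set (Matrix (Fin n) (Fin n) ℂ))) ∧ M = w.prod}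
      = GenB n i k := by
  ext M
  constructor
  · rintro ⟨w, hlen, hmem, rfl⟩
    refine ⟨w.map (fun x => decide (x = jordan n ^ i)), by simpa using hlen, ?_⟩
    rw [← Wrd_eq, List.map_map]
    congr 1
    have : ∀ x ∈ w, ((Mb n i) ∘ (fun x => decide (x = jordan n ^ i))) x = id x := by
      intro x hx
      simp only [Function.comp_apply, id_eq]
      by_cases h2 : x = jordan n ^ i
      · rw [decide_eq_true h2]
        exact (A_eq hin).symm.trans h2.symm
      · rw [decide_eq_false h2]
        rcases hmem x hx with h | h
        · exact absurd h h2
        · rw [Set.mem_singleton_iff] at h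
          exact (B_eq hi hin).symm.trans h.symm
    rw [List.map_congr_left this, List.map_id]
  · rintro ⟨bw, hlen, rfl⟩
    refine ⟨bw.map (Mb n i), by simpa using hlen, ?_, (Wrd_eq bw).symm⟩
    intro x hx
    rcases List.mem_map.1 hx with ⟨b, _, rfl⟩
    cases b
    · right
      rw [Set.mem_singleton_iff]
      exact (B_eq hi hin).symm
    · left
      exact (A_eq hin).symm

lemma wordSpan_eq (hi : 0 < i) (hin : i < n) (k : ℕ) :
    wordSpan n k ({jordan n ^ i, (jordan n)ᵀ ^ (n - i)} :
        Set (Matrix (Fin n) (Fin n) ℂ))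
      = Submodule.span ℂ (GenB n i k) := by
  rw [wordSpan, words_set_eq hi hin]

lemma UB (hd0 : 0 < d) (hn : n = d * m) (hi' : i = d * u')
    (hm : u' + v' = m) (hu : 0 < u') (hv : 0 < v') (hco : Nat.Coprime u' m) :
    ∀ w : List Bool, Wrd n i w ∈ Submodule.span ℂ (GenB n i (2 * m - 2)) := by
  intro w
  have hm0 : 0 < m := by omega
  have hm2 : 2 ≤ m := by omega
  by_cases hlen : w.length ≤ 2 * m - 2
  · exact Submodule.subset_span ⟨w, hlen, rfl⟩
  · push_neg at hlen
    set L := w.length with hLdef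
    set L' := (m - 1) + (L - (m - 1)) % m with hL'def
    have hmod : (L - (m - 1)) % m < m := Nat.mod_lt _ hm0
    have hL'le : L' ≤ 2 * m - 2 := by omega
    have hL'ge : m - 1 ≤ L' := by omega
    have hcong : L % m = L' % m := by
      conv_lhs => rw [show L = (m - 1) + (L - (m - 1)) from by omega]
      rw [hL'def, Nat.add_mod_mod]
    have hsum : Wrd n i w
        = ∑ j ∈ Finset.range m, (if okB u' m w j = true then (1 : ℂ) else 0)
            • Wrd n i (wjw u' v' m j L') := by
      ext a b
      rw [Wrd_apply, Matrix.sum_apply]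
      have hba : ∀ j ∈ Finset.range m,
          ((if okB u' m w j = true then (1 : ℂ) else 0) • Wrd n i (wjw u' v' m j L')) a b
            = (if okB u' m w j = true then (1 : ℂ) else 0)
              * ((if (a : ℕ) / d = j then 1 else 0)
                  * (if ((a : ℕ) + L' * i) % n = (b : ℕ) then 1 else 0)) := by
        intro j hj
        rw [Matrix.smul_apply, Wrd_apply, wjw_length,
          fDl_wjw hd0 hn hi' hm hu hv hco (Finset.mem_range.1 hj) hL'ge]
        simp [smul_eq_mul]
      rw [Finset.sum_congr rfl hba]
      have hblk : (a : ℕ) / d < m := blk_lt hd0 hn a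
      rw [Finset.sum_eq_single ((a : ℕ) / d)]
      · rw [if_pos rfl, one_mul, fDl_okB hd0 hn hi' hm0,
          mod_shift hd0 hn hi' hm0 ((a : ℕ)) hcong]
      · intro j hj hne
        have hz : (if (a : ℕ) / d = j then (1 : ℂ) else 0) = 0 :=
          if_neg (fun hc => hne hc.symm)
        rw [hz]
        ring
      · intro hc
        exact absurd (Finset.mem_range.2 hblk) hc
    rw [hsum]
    apply Submodule.sum_mem
    intro j hj
    apply Submodule.smul_mem
    apply Submodule.subset_span
    exact ⟨wjw u' v' m j L', by rw [wjw_length]; exact hL'le, rfl⟩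


lemma mod_cong_iff (hd0 : 0 < d) (hn : n = d * m) (hi' : i = d * u')
    (hco : Nat.Coprime u' m) (hm0 : 0 < m) (x : ℕ) (L K : ℕ) :
    ((x + L * i) % n = (x + K * i) % n) ↔ L % m = K % m := by
  constructor
  · intro h
    have h1 : Nat.ModEq n (x + L * i) (x + K * i) := h
    have h2 : Nat.ModEq n (L * i) (K * i) := Nat.ModEq.add_left_cancel' x h1
    have h3 : (n : ℤ) ∣ ((K : ℤ) * i - (L : ℤ) * i) := by
      have := (Nat.modEq_iff_dvd).1 h2
      push_cast at this
      exact this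
    have hiZ : (i : ℤ) = (d : ℤ) * u' := by exact_mod_cast hi'
    have hnZ : (n : ℤ) = (d : ℤ) * m := by exact_mod_cast hn
    have he : (K : ℤ) * i - (L : ℤ) * i = (d : ℤ) * (((K : ℤ) - L) * u') := by
      rw [hiZ]; ring
    rw [he, hnZ] at h3
    have hd0Z : (d : ℤ) ≠ 0 := by exact_mod_cast hd0.ne'
    have h5 : (m : ℤ) ∣ ((K : ℤ) - L) * u' := (mul_dvd_mul_iff_left hd0Z).1 h3
    have hcoZ : IsCoprime (m : ℤ) ((u' : ℕ) : ℤ) := by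
      rw [Nat.isCoprime_iff_coprime]
      exact hco.symm
    have h6 : (m : ℤ) ∣ ((K : ℤ) - L) := hcoZ.dvd_of_dvd_mul_right h5
    have h7 : Nat.ModEq m L K := (Nat.modEq_iff_dvd).2 (by push_cast; exact h6)
    exact h7
  · intro h
    exact mod_shift hd0 hn hi' hm0 x h

/-- evaluation of a matrix entry, as a linear map -/
def evalAt (x y : Fin n) : Matrix (Fin n) (Fin n) ℂ →ₗ[ℂ] ℂ where
  toFun N := N x y
  map_add' := by intro N M; simp
  map_smul' := by intro c N; simp

lemma okB_eq_of_window (hm : u' + v' = m) {j j' : ℕ} (hj : j < m) (hj' : j' < m)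
    (w : List Bool) (hwin : ∀ t, t < w.length → pio u' v' m j t = pio u' v' m j' t) :
    okB u' m w j = okB u' m w j' := by
  have h1 := okB_spec hm w j hj
  have h2 := okB_spec hm w j' hj'
  have hiff : okB u' m w j = true ↔ okB u' m w j' = true := by
    rw [h1, h2]
    constructor
    · intro h t ht; rw [← hwin t ht]; exact h t ht
    · intro h t ht; rw [hwin t ht]; exact h t ht
  cases hb : okB u' m w j <;> cases hb' : okB u' m w j' <;> simp_all

lemma LB (hii : 0 < i) (hin : i < n) (hd0 : 0 < d) (hn : n = d * m) (hi' : i = d * u')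
    (hm : u' + v' = m) (hu : 0 < u') (hv : 0 < v') (hco : Nat.Coprime u' m)
    (k : ℕ) (hk : k < 2 * m - 2) :
    wordSpan n k ({jordan n ^ i, (jordan n)ᵀ ^ (n - i)} :
        Set (Matrix (Fin n) (Fin n) ℂ))
      ≠ wordSpan n (k + 1) ({jordan n ^ i, (jordan n)ᵀ ^ (n - i)} :
        Set (Matrix (Fin n) (Fin n) ℂ)) := by
  have hm0 : 0 < m := by omega
  have hm2 : 2 ≤ m := by omega
  have hn0 : 0 < n := by omega
  intro hEq
  rw [wordSpan_eq hii hin k, wordSpan_eq hii hin (k + 1)] at hEq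
  by_cases hcase : k + 1 ≤ m - 1
  -- Case 1 --
  · set a₀ : Fin n := ⟨0, hn0⟩ with ha₀
    set b₀ : Fin n := ⟨(((a₀ : ℕ)) + (k + 1) * i) % n, Nat.mod_lt _ hn0⟩ with hb₀
    set φ : Matrix (Fin n) (Fin n) ℂ →ₗ[ℂ] ℂ := evalAt a₀ b₀ with hφ
    have hker : Submodule.span ℂ (GenB n i k) ≤ LinearMap.ker φ := by
      rw [Submodule.span_le]
      rintro M ⟨w, hlen, rfl⟩
      simp only [SetLike.mem_coe, LinearMap.mem_ker, hφ, evalAt, LinearMap.coe_mk,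
        AddHom.coe_mk]
      change Wrd n i w a₀ b₀ = 0
      rw [Wrd_apply]
      have hne : ¬ (((a₀ : ℕ) + w.length * i) % n = (b₀ : ℕ)) := by
        intro hc
        have : (((a₀ : ℕ) + w.length * i) % n = ((a₀ : ℕ) + (k + 1) * i) % n) := hc
        rw [mod_cong_iff hd0 hn hi' hco hm0] at this
        rw [Nat.mod_eq_of_lt (show w.length < m by omega),
          Nat.mod_eq_of_lt (show k + 1 < m by omega)] at this
        omega
      rw [if_neg hne, mul_zero]
    set wstar := wjw u' v' m 0 (k + 1) with hwstar
    have hmem : Wrd n i wstar ∈ Submodule.span ℂ (GenB n i (k + 1)) :=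
      Submodule.subset_span ⟨wstar, by rw [hwstar, wjw_length], rfl⟩
    rw [← hEq] at hmem
    have := hker hmem
    rw [LinearMap.mem_ker, hφ] at this
    simp only [evalAt, LinearMap.coe_mk, AddHom.coe_mk] at this
    change Wrd n i wstar a₀ b₀ = 0 at this
    rw [Wrd_apply] at this
    have hcond : (((a₀ : ℕ) + wstar.length * i) % n = (b₀ : ℕ)) := by
      rw [hwstar, wjw_length]
    rw [if_pos hcond, mul_one] at this
    rw [fDl_okB hd0 hn hi' hm0] at this
    have h00 : ((a₀ : ℕ)) / d = 0 := by
      rw [ha₀]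
      simp
    rw [h00, okB_wjw_self hm 0 (k + 1) hm0] at this
    simp at this
  -- Case 2 --
  · push_neg at hcase
    have hkm : m ≤ k + 1 := by omega
    set r := k + 1 - m with hr
    have hrm : r ≤ m - 2 := by omega
    set j₁ := jone u' v' m with hj₁
    set j₂ := jtwo u' v' m with hj₂
    have hj₁m : j₁ < m := jone_lt hm0
    have hj₂m : j₂ < m := jtwo_lt hm0
    have hd1 : d * j₁ < n := by
      rw [hn]
      exact Nat.mul_lt_mul_left hd0 |>.2 hj₁m
    have hd2 : d * j₂ < n := by
      rw [hn]
      exact Nat.mul_lt_mul_left hd0 |>.2 hj₂m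
    set a₁ : Fin n := ⟨d * j₁, hd1⟩ with ha₁
    set a₂ : Fin n := ⟨d * j₂, hd2⟩ with ha₂
    set b₁ : Fin n := ⟨(((a₁ : ℕ)) + (k + 1) * i) % n, Nat.mod_lt _ hn0⟩ with hb₁
    set b₂ : Fin n := ⟨(((a₂ : ℕ)) + (k + 1) * i) % n, Nat.mod_lt _ hn0⟩ with hb₂
    set φ : Matrix (Fin n) (Fin n) ℂ →ₗ[ℂ] ℂ := evalAt a₁ b₁ - evalAt a₂ b₂ with hφ
    have hblk1 : ((a₁ : ℕ)) / d = j₁ := by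
      rw [ha₁]
      exact Nat.mul_div_cancel_left _ hd0
    have hblk2 : ((a₂ : ℕ)) / d = j₂ := by
      rw [ha₂]
      exact Nat.mul_div_cancel_left _ hd0
    have hφapp : ∀ w : List Bool, φ (Wrd n i w)
        = (if okB u' m w j₁ = true then (1:ℂ) else 0)
            * (if ((a₁ : ℕ) + w.length * i) % n = (b₁ : ℕ) then 1 else 0)
          - (if okB u' m w j₂ = true then (1:ℂ) else 0)
            * (if ((a₂ : ℕ) + w.length * i) % n = (b₂ : ℕ) then 1 else 0) := by
      intro w
      rw [hφ]
      simp only [LinearMap.sub_apply, evalAt, LinearMap.coe_mk, AddHom.coe_mk]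
      change Wrd n i w a₁ b₁ - Wrd n i w a₂ b₂ = _
      rw [Wrd_apply, Wrd_apply, fDl_okB hd0 hn hi' hm0, fDl_okB hd0 hn hi' hm0,
        hblk1, hblk2]
    have hker : Submodule.span ℂ (GenB n i k) ≤ LinearMap.ker φ := by
      rw [Submodule.span_le]
      rintro M ⟨w, hlen, rfl⟩
      simp only [SetLike.mem_coe, LinearMap.mem_ker]
      rw [hφapp w]
      by_cases hcong : w.length % m = (k + 1) % m
      · -- then w.length = r
        have hlr : w.length = r := by
          have h1 : (k + 1) % m = r := by
            conv_lhs => rw [show k + 1 = r + m by omega]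
            rw [Nat.add_mod_right]
            exact Nat.mod_eq_of_lt (by omega)
          rw [h1] at hcong
          have h2 := Nat.div_add_mod w.length m
          rcases Nat.eq_zero_or_pos (w.length / m) with h3 | h3
          · rw [h3, Nat.mul_zero] at h2
            omega
          · exfalso
            have h4 : m * 1 ≤ m * (w.length / m) := Nat.mul_le_mul_left m h3
            rw [Nat.mul_one] at h4
            omega
        have hagree : ∀ t, t < w.length → pio u' v' m j₁ t = pio u' v' m j₂ t := by
          intro t ht
          exact P7agree hm hu hv hco t (by omega)
        have hok : okB u' m w j₁ = okB u' m w j₂ :=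
          okB_eq_of_window hm hj₁m hj₂m w hagree
        have hcond1 : (((a₁ : ℕ) + w.length * i) % n = (b₁ : ℕ)) := by
          show _ = (((a₁ : ℕ)) + (k + 1) * i) % n
          exact mod_shift hd0 hn hi' hm0 _ hcong
        have hcond2 : (((a₂ : ℕ) + w.length * i) % n = (b₂ : ℕ)) := by
          show _ = (((a₂ : ℕ)) + (k + 1) * i) % n
          exact mod_shift hd0 hn hi' hm0 _ hcong
        rw [hok, if_pos hcond1, if_pos hcond2]
        ring
      · have hcond1 : ¬ (((a₁ : ℕ) + w.length * i) % n = (b₁ : ℕ)) := by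
          intro hc
          exact hcong ((mod_cong_iff hd0 hn hi' hco hm0 _ _ _).1 hc)
        have hcond2 : ¬ (((a₂ : ℕ) + w.length * i) % n = (b₂ : ℕ)) := by
          intro hc
          exact hcong ((mod_cong_iff hd0 hn hi' hco hm0 _ _ _).1 hc)
        rw [if_neg hcond1, if_neg hcond2]
        ring
    set wstar := wjw u' v' m j₁ (k + 1) with hwstar
    have hmem : Wrd n i wstar ∈ Submodule.span ℂ (GenB n i (k + 1)) :=
      Submodule.subset_span ⟨wstar, by rw [hwstar, wjw_length], rfl⟩
    rw [← hEq] at hmem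
    have hzero := hker hmem
    rw [LinearMap.mem_ker] at hzero
    rw [hφapp wstar] at hzero
    have hlenstar : wstar.length = k + 1 := by rw [hwstar, wjw_length]
    have hcond1 : (((a₁ : ℕ) + wstar.length * i) % n = (b₁ : ℕ)) := by
      rw [hlenstar]
    have hcond2 : (((a₂ : ℕ) + wstar.length * i) % n = (b₂ : ℕ)) := by
      rw [hlenstar]
    rw [if_pos hcond1, if_pos hcond2] at hzero
    have hok1 : okB u' m wstar j₁ = true := okB_wjw_self hm j₁ (k + 1) hj₁m
    have hok2 : okB u' m wstar j₂ = false := by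
      cases h : okB u' m wstar j₂ with
      | false => rfl
      | true =>
        exfalso
        have hspec := (okB_spec hm wstar j₂ hj₂m).1 h
        have ht : m - 2 < wstar.length := by rw [hlenstar]; omega
        have h1 := hspec (m - 2) ht
        have h3 : wstar[m - 2]'ht = pio u' v' m j₁ (m - 2) := wjw_get _ _ _ ht
        rw [h3] at h1
        have h2 := P7diff hm hu hv hco
        rw [hj₁, hj₂] at h1
        rw [h2.1, h2.2] at h1
        exact absurd h1 (by simp)
    rw [hok1, hok2] at hzero
    simp at hzero


lemma wordSpan_mono {n : ℕ} (S : Set (Matrix (Fin n) (Fin n) ℂ)) {k k' : ℕ} (h : k ≤ k') :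
    wordSpan n k S ≤ wordSpan n k' S := by
  apply Submodule.span_mono
  rintro M ⟨w, hlen, hmem, rfl⟩
  exact ⟨w, le_trans hlen h, hmem, rfl⟩

lemma stable (hii : 0 < i) (hin : i < n) (hd0 : 0 < d) (hn : n = d * m) (hi' : i = d * u')
    (hm : u' + v' = m) (hu : 0 < u') (hv : 0 < v') (hco : Nat.Coprime u' m) :
    wordSpan n (2 * m - 2) ({jordan n ^ i, (jordan n)ᵀ ^ (n - i)} :
        Set (Matrix (Fin n) (Fin n) ℂ))
      = wordSpan n (2 * m - 2 + 1) ({jordan n ^ i, (jordan n)ᵀ ^ (n - i)} :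
        Set (Matrix (Fin n) (Fin n) ℂ)) := by
  apply le_antisymm
  · exact wordSpan_mono _ (by omega)
  · rw [wordSpan_eq hii hin, wordSpan_eq hii hin]
    apply Submodule.span_le.2
    rintro M ⟨w, hlen, rfl⟩
    exact UB hd0 hn hi' hm hu hv hco w

end Spans
end S19

/-- For `0 < i < n` and `d = gcd(n, i)`, the least `k` with `L_k(S) = L_{k+1}(S)` for
`S = {J_n^i, (J_nᵀ)^{n-i}}` equals `2(n/d) - 2`; that is, `l(S) = 2n/d - 2`. -/
theorem stmt_19 (n i : ℕ) (hi : 0 < i) (hin : i < n) (d : ℕ) (hd : d = Nat.gcd n i) :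
    let S : Set (Matrix (Fin n) (Fin n) ℂ) := {jordan n ^ i, (jordan n)ᵀ ^ (n - i)}
    sInf {k | wordSpan n k S = wordSpan n (k + 1) S} = 2 * (n / d) - 2 := by
  intro S
  have hgcdpos : 0 < Nat.gcd n i := Nat.gcd_pos_of_pos_right n hi
  have hd0 : 0 < d := hd ▸ hgcdpos
  have hdn : d ∣ n := hd ▸ Nat.gcd_dvd_left n i
  have hdi : d ∣ i := hd ▸ Nat.gcd_dvd_right n i
  set m := n / d with hmdef
  set u' := i / d with hu'def
  set v' := (n - i) / d with hv'def
  have hn : n = d * m := (Nat.mul_div_cancel' hdn).symm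
  have hi' : i = d * u' := (Nat.mul_div_cancel' hdi).symm
  have hdni : d ∣ (n - i) := Nat.dvd_sub hdn hdi
  have hvv : n - i = d * v' := (Nat.mul_div_cancel' hdni).symm
  have hm : u' + v' = m := by
    have h2 : d * (u' + v') = d * m := by
      have h1 : d * (u' + v') = d * u' + d * v' := by ring
      rw [h1, ← hi', ← hvv, ← hn]
      omega
    exact Nat.eq_of_mul_eq_mul_left hd0 h2
  have hu : 0 < u' := Nat.div_pos (Nat.le_of_dvd hi hdi) hd0
  have hv : 0 < v' := Nat.div_pos (Nat.le_of_dvd (by omega) hdni) hd0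
  have hco : Nat.Coprime u' m := by
    have h1 := Nat.coprime_div_gcd_div_gcd (m := n) (n := i) hgcdpos
    rw [← hd] at h1
    exact h1.symm
  have hmem : (2 * m - 2) ∈ {k | wordSpan n k S = wordSpan n (k + 1) S} :=
    S19.stable hi hin hd0 hn hi' hm hu hv hco
  apply le_antisymm
  · exact Nat.sInf_le hmem
  · apply le_csInf ⟨_, hmem⟩
    intro b hb
    by_contra hlt
    push_neg at hlt
    exact S19.LB hi hin hd0 hn hi' hm hu hv hco b (by omega) hb
end
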